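/- Let ρ be a representation of H_n(q) on a finite-dimensional complex vector space V, and let 2 ≤ j ≤ n. Then every eigenvalue μ of the operator ρ(y_j) satisfies: μ is an eigenvalue of ρ(y_{j−1}), or μ = q² a for some eigenvalue a of ρ(y_{j−1}), or μ = q^{-2} a for some eigenvalue a of ρ(y_{j−1}). -/
import Mathlib


open FreeAlgebra in
/-- Defining relations of the A-type Hecke algebra `H_n(q)` on generators
`σ_1, …, σ_{n-1}` (generator `i : Fin (n-1)` represents `σ_{i+1}`). -/
inductive HeckeRel (n : ℕ) (q : ℂ) :
    FreeAlgebra ℂ (Fin (n - 1)) → FreeAlgebra ℂ (Fin (n - 1)) → Prop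
  | braid (i j : Fin (n - 1)) (h : (i : ℕ) + 1 = (j : ℕ)) :
      HeckeRel n q (ι ℂ i * ι ℂ j * ι ℂ i) (ι ℂ j * ι ℂ i * ι ℂ j)
  | comm (i j : Fin (n - 1)) (h : (i : ℕ) + 1 < (j : ℕ)) :
      HeckeRel n q (ι ℂ i * ι ℂ j) (ι ℂ j * ι ℂ i)
  | quad (i : Fin (n - 1)) :
      HeckeRel n q (ι ℂ i * ι ℂ i) (1 + (q - q⁻¹) • ι ℂ i)

/-- The A-type Hecke algebra `H_n(q)`. -/
abbrev HeckeAlgebra (n : ℕ) (q : ℂ) := RingQuot (HeckeRel n q)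

/-- The generator `σ_k` (1-based: valid for `1 ≤ k ≤ n-1`; junk value `1` otherwise). -/
noncomputable def heckeGen (n : ℕ) (q : ℂ) (k : ℕ) : HeckeAlgebra n q :=
  if h : k - 1 < n - 1 then RingQuot.mkAlgHom ℂ (HeckeRel n q) (FreeAlgebra.ι ℂ ⟨k - 1, h⟩)
  else 1

/-- The Jucys–Murphy elements, 1-based: `jm 1 = 1`, `jm (i+1) = σ_i * jm i * σ_i`. -/
noncomputable def jm (n : ℕ) (q : ℂ) : ℕ → HeckeAlgebra n q
  | 0 => 1
  | 1 => 1
  | (i + 2) => heckeGen n q (i + 1) * jm n q (i + 1) * heckeGen n q (i + 1)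


lemma heckeGen_eq (n : ℕ) (q : ℂ) (k : ℕ) (h : k - 1 < n - 1) :
    heckeGen n q k = RingQuot.mkAlgHom ℂ (HeckeRel n q) (FreeAlgebra.ι ℂ ⟨k - 1, h⟩) :=
  dif_pos h

lemma heckeGen_quad (n : ℕ) (q : ℂ) (k : ℕ) (h : k - 1 < n - 1) :
    heckeGen n q k * heckeGen n q k = 1 + (q - q⁻¹) • heckeGen n q k := by
  rw [heckeGen_eq n q k h, ← map_mul,
    RingQuot.mkAlgHom_rel _ (HeckeRel.quad ⟨k - 1, h⟩), map_add, map_one, map_smul]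

lemma heckeGen_braid (n : ℕ) (q : ℂ) (k : ℕ) (hk : 1 ≤ k) (h : k < n - 1) :
    heckeGen n q k * heckeGen n q (k + 1) * heckeGen n q k
      = heckeGen n q (k + 1) * heckeGen n q k * heckeGen n q (k + 1) := by
  have h1 : k - 1 < n - 1 := by omega
  have h2 : (k + 1) - 1 < n - 1 := by omega
  rw [heckeGen_eq n q k h1, heckeGen_eq n q (k + 1) h2, ← map_mul, ← map_mul, ← map_mul,
    ← map_mul, RingQuot.mkAlgHom_rel _ (HeckeRel.braid ⟨k - 1, h1⟩ ⟨(k + 1) - 1, h2⟩ (by simp; omega))]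

lemma heckeGen_comm (n : ℕ) (q : ℂ) (k l : ℕ) (hk : 1 ≤ k) (h : k + 1 < l) :
    heckeGen n q k * heckeGen n q l = heckeGen n q l * heckeGen n q k := by
  by_cases h2 : l - 1 < n - 1
  · have h1 : k - 1 < n - 1 := by omega
    rw [heckeGen_eq n q k h1, heckeGen_eq n q l h2, ← map_mul, ← map_mul,
      RingQuot.mkAlgHom_rel _ (HeckeRel.comm ⟨k - 1, h1⟩ ⟨l - 1, h2⟩ (by simp; omega))]
  · have : heckeGen n q l = 1 := dif_neg h2
    rw [this, one_mul, mul_one]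

lemma gen_comm_jm (n : ℕ) (q : ℂ) : ∀ i k : ℕ, i + 1 ≤ k →
    heckeGen n q k * jm n q i = jm n q i * heckeGen n q k := by
  intro i
  induction i using Nat.strong_induction_on with
  | _ i ih =>
    match i with
    | 0 => intro k _; simp [jm]
    | 1 => intro k _; simp [jm]
    | (m + 2) =>
      intro k hk
      have h1 : heckeGen n q k * heckeGen n q (m + 1) = heckeGen n q (m + 1) * heckeGen n q k :=
        (heckeGen_comm n q (m + 1) k (by omega) (by omega)).symm
      have h2 := ih (m + 1) (by omega) k (by omega)
      have h1' : ∀ t, heckeGen n q k * (heckeGen n q (m + 1) * t)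
          = heckeGen n q (m + 1) * (heckeGen n q k * t) := by
        intro t; rw [← mul_assoc, h1, mul_assoc]
      have h2' : ∀ t, heckeGen n q k * (jm n q (m + 1) * t)
          = jm n q (m + 1) * (heckeGen n q k * t) := by
        intro t; rw [← mul_assoc, h2, mul_assoc]
      rw [jm]
      simp only [mul_assoc]
      rw [h1', h2', h1]

lemma key_comm (n : ℕ) (q : ℂ) : ∀ i : ℕ, i < n →
    heckeGen n q i * jm n q i * heckeGen n q i * jm n q i
      = jm n q i * heckeGen n q i * jm n q i * heckeGen n q i := by
  intro i
  induction i using Nat.strong_induction_on with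
  | _ i ih =>
    match i with
    | 0 => intro _; simp [jm]
    | 1 => intro _; simp [jm]
    | (m + 2) =>
      intro hin
      set a := heckeGen n q (m + 2) with ha
      set b := heckeGen n q (m + 1) with hb
      set w := jm n q (m + 1) with hw
      have haw : ∀ t, a * (w * t) = w * (a * t) := by
        intro t
        rw [← mul_assoc, gen_comm_jm n q (m + 1) (m + 2) (by omega), mul_assoc]
      have hbraid := heckeGen_braid n q (m + 1) (by omega) (by omega)
      have hba : ∀ t, b * (a * (b * t)) = a * (b * (a * t)) := by
        intro t
        rw [← mul_assoc, ← mul_assoc, ← mul_assoc, ← mul_assoc]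
        rw [show b * a * b = a * b * a from hbraid]
      have hba0 : b * (a * b) = a * (b * a) := by
        rw [← mul_assoc, ← mul_assoc, hbraid]
      have hihraw := ih (m + 1) (by omega) (by omega)
      have hih : ∀ t, b * (w * (b * (w * t))) = w * (b * (w * (b * t))) := by
        intro t
        simp only [← mul_assoc]
        rw [show b * w * b * w = w * b * w * b from hihraw]
      show a * (b * w * b) * a * (b * w * b) = (b * w * b) * a * (b * w * b) * a
      simp only [mul_assoc]
      calc a * (b * (w * (b * (a * (b * (w * b))))))
          = a * (b * (w * (a * (b * (a * (w * b)))))) := by rw [hba]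
        _ = a * (b * (w * (a * (b * (w * (a * b)))))) := by rw [haw]
        _ = a * (b * (a * (w * (b * (w * (a * b)))))) := by rw [← haw]
        _ = b * (a * (b * (w * (b * (w * (a * b)))))) := by rw [← hba]
        _ = b * (a * (w * (b * (w * (b * (a * b)))))) := by rw [hih]
        _ = b * (w * (a * (b * (w * (b * (a * b)))))) := by rw [← haw]
        _ = b * (w * (a * (b * (w * (a * (b * a)))))) := by rw [hba0]
        _ = b * (w * (a * (b * (a * (w * (b * a)))))) := by rw [haw]
        _ = b * (w * (b * (a * (b * (w * (b * a))))))  := by rw [hba]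

lemma jm_mul_comm (n : ℕ) (q : ℂ) (j : ℕ) (hj2 : 2 ≤ j) (hjn : j ≤ n) :
    jm n q (j - 1) * jm n q j = jm n q j * jm n q (j - 1) := by
  obtain ⟨m, rfl⟩ : ∃ m, j = m + 2 := ⟨j - 2, by omega⟩
  have hd : m + 2 - 1 = m + 1 := by omega
  rw [hd, show jm n q (m + 2) = heckeGen n q (m + 1) * jm n q (m + 1) * heckeGen n q (m + 1) from rfl]
  have := key_comm n q (m + 1) (by omega)
  simp only [mul_assoc] at this ⊢
  exact this.symm


/-- in a finite-dimensional representation `ρ` of `H_n(q)`, every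
eigenvalue of `ρ(y_j)` (`2 ≤ j ≤ n`) is an eigenvalue of `ρ(y_{j-1})`, or `q²` times one,
or `q⁻²` times one. -/
theorem jm_eigenvalue_step (n : ℕ) (q : ℂ) (hn : 1 ≤ n) (hq : q ≠ 0)
    (V : Type) [AddCommGroup V] [Module ℂ V] [FiniteDimensional ℂ V]
    (ρ : HeckeAlgebra n q →ₐ[ℂ] Module.End ℂ V) (j : ℕ) (hj2 : 2 ≤ j) (hjn : j ≤ n)
    (μ : ℂ) (hμ : Module.End.HasEigenvalue (ρ (jm n q j)) μ) :
    Module.End.HasEigenvalue (ρ (jm n q (j - 1))) μ ∨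
    (∃ a : ℂ, Module.End.HasEigenvalue (ρ (jm n q (j - 1))) a ∧ μ = q ^ 2 * a) ∨
    (∃ a : ℂ, Module.End.HasEigenvalue (ρ (jm n q (j - 1))) a ∧ μ = q⁻¹ ^ 2 * a) := by
  obtain ⟨m, rfl⟩ : ∃ m, j = m + 2 := ⟨j - 2, by omega⟩
  have hd : m + 2 - 1 = m + 1 := by omega
  rw [hd] at *
  set c : ℂ := q - q⁻¹ with hc
  set A : Module.End ℂ V := ρ (heckeGen n q (m + 1)) with hA
  set B : Module.End ℂ V := ρ (jm n q (m + 1)) with hB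
  set M : Module.End ℂ V := ρ (jm n q (m + 2)) with hM
  have hMdef : M = A * B * A := by
    rw [hM, show jm n q (m + 2)
      = heckeGen n q (m + 1) * jm n q (m + 1) * heckeGen n q (m + 1) from rfl, map_mul, map_mul]
  have hA2 : A * A = 1 + c • A := by
    rw [hA, ← map_mul, heckeGen_quad n q (m + 1) (by omega), map_add, map_one, map_smul]
  have hBM : B * M = M * B := by
    have hcm : jm n q (m + 1) * jm n q (m + 2) = jm n q (m + 2) * jm n q (m + 1) :=
      jm_mul_comm n q (m + 2) (by omega) (by omega)
    rw [hB, hM, ← map_mul, ← map_mul, hcm]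
  -- the μ-eigenspace of M is B-invariant
  have hmaps : ∀ x ∈ Module.End.eigenspace M μ, B x ∈ Module.End.eigenspace M μ := by
    intro x hx
    rw [Module.End.mem_eigenspace_iff] at hx ⊢
    calc M (B x) = (M * B) x := rfl
      _ = (B * M) x := by rw [hBM]
      _ = B (M x) := rfl
      _ = B (μ • x) := by rw [hx]
      _ = μ • B x := map_smul B μ x
  have hnt : Nontrivial (Module.End.eigenspace M μ) :=
    Submodule.nontrivial_iff_ne_bot.mpr hμ
  obtain ⟨a, ha⟩ := Module.End.exists_eigenvalue (B.restrict hmaps)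
  obtain ⟨v', hv'⟩ := ha.exists_hasEigenvector
  set v : V := (v' : V) with hv
  have hv0 : v ≠ 0 := fun h => hv'.2 (Subtype.coe_injective (by simpa [hv] using h))
  have hMv : M v = μ • v := Module.End.mem_eigenspace_iff.mp v'.2
  have hBv : B v = a • v := by
    have := congrArg (Subtype.val) (Module.End.mem_eigenspace_iff.mp hv'.1)
    simpa [LinearMap.restrict_coe_apply] using this
  have haev : Module.End.HasEigenvalue B a :=
    Module.End.hasEigenvalue_of_hasEigenvector ⟨Module.End.mem_eigenspace_iff.mpr hBv, hv0⟩
  -- inverse relation: (A - c•1) * A = 1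
  have hinv : (A - c • 1) * A = 1 := by
    rw [sub_mul, hA2, smul_mul_assoc, one_mul]; abel
  have hBAv : B (A v) = μ • (A v) - (c * μ) • v := by
    have h1 : B * A = (A - c • 1) * M := by
      rw [hMdef, ← mul_assoc, ← mul_assoc, hinv, one_mul]
    calc B (A v) = (B * A) v := rfl
      _ = ((A - c • 1) * M) v := by rw [h1]
      _ = (A - c • 1) (M v) := rfl
      _ = (A - c • 1) (μ • v) := by rw [hMv]
      _ = μ • (A v) - (c * μ) • v := by
          simp [LinearMap.sub_apply, LinearMap.smul_apply, smul_smul, map_smul, smul_sub,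
            mul_comm, sub_smul]
  by_cases hdep : ∃ t : ℂ, A v = t • v
  · obtain ⟨t, ht⟩ := hdep
    have hAAv : (A * A) v = (t * t) • v := by
      calc (A * A) v = A (A v) := rfl
        _ = A (t • v) := by rw [ht]
        _ = t • (A v) := map_smul A t v
        _ = (t * t) • v := by rw [ht, smul_smul]
    have hAAv' : (A * A) v = (1 + c * t) • v := by
      rw [hA2]
      simp [LinearMap.add_apply, LinearMap.smul_apply, ht, smul_smul, add_smul]
    have hsc : ∀ x y : ℂ, x • v = y • v → x = y := by
      intro x y h
      have : (x - y) • v = 0 := by rw [sub_smul, h, sub_self]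
      rcases smul_eq_zero.mp this with h' | h'
      · exact sub_eq_zero.mp h'
      · exact absurd h' hv0
    have hteq : t * t = 1 + c * t := hsc _ _ (hAAv.symm.trans hAAv')
    have hμeq : μ = t * t * a := by
      have : M v = (t * t * a) • v := by
        calc M v = (A * B * A) v := by rw [hMdef]
          _ = A (B (A v)) := rfl
          _ = A (B (t • v)) := by rw [ht]
          _ = A (t • (a • v)) := by rw [map_smul, hBv]
          _ = (t * a) • A v := by rw [smul_smul, map_smul]
          _ = (t * t * a) • v := by rw [ht, smul_smul, show t * a * t = t * t * a by ring]
      exact hsc μ (t * t * a) (hMv.symm.trans this)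
    have hcase : t = q ∨ t = -q⁻¹ := by
      have : (t - q) * (t + q⁻¹) = 0 := by
        have hq2 : q * q⁻¹ = 1 := mul_inv_cancel₀ hq
        rw [hc] at hteq
        linear_combination hteq - hq2
      rcases mul_eq_zero.mp this with h' | h'
      · exact Or.inl (sub_eq_zero.mp h')
      · exact Or.inr (eq_neg_of_add_eq_zero_left h')
    rcases hcase with rfl | rfl
    · exact Or.inr (Or.inl ⟨a, haev, by rw [hμeq]; ring⟩)
    · exact Or.inr (Or.inr ⟨a, haev, by rw [hμeq]; ring⟩)
  · by_cases hμa : μ = a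
    · exact Or.inl (hμa ▸ haev)
    · left
      set u : V := A v + (c * μ / (a - μ)) • v with hu
      have hu0 : u ≠ 0 := by
        intro h
        exact hdep ⟨-(c * μ / (a - μ)), by
          have := eq_neg_of_add_eq_zero_left (hu ▸ h)
          rw [this, neg_smul]⟩
      have hBu : B u = μ • u := by
        rw [hu, map_add, map_smul, hBAv, hBv, smul_smul, smul_add, smul_smul]
        have hne : a - μ ≠ 0 := sub_ne_zero.mpr (Ne.symm hμa)
        have hkey : c * μ / (a - μ) * a - c * μ = μ * (c * μ / (a - μ)) := by
          have hs : c * μ / (a - μ) * (a - μ) = c * μ := div_mul_cancel₀ _ hne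
          linear_combination hs
        rw [sub_add_eq_add_sub, add_sub_assoc, ← sub_smul, hkey]
      exact Module.End.hasEigenvalue_of_hasEigenvector
        ⟨Module.End.mem_eigenspace_iff.mpr hBu, hu0⟩
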